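/- Let Z₁,…,Zₙ be i.i.d. real random variables with Zᵢ ≤ 0 a.s. and E[Z₁²] < ∞, let λ > 0, δ ∈ (0,1], and set R = E[Z₁] and R̂_λ = −(1/(nλ))∑ᵢ log(1 − λZᵢ). With probability at least 1 − δ: R − R̂_λ ≤ log(2/δ)/(λn) and R̂_λ − R ≤ λ·E[Z₁²/(1 − λZ₁)] + log(2/δ)/(λn). In particular, choosing λ* = √(log(2/δ)/(n E[Z₁²])) gives |R − R̂_{λ*}| ≤ 2√(E[Z₁²] log(2/δ)/n). -/

import Mathlib

open MeasureTheory ProbabilityTheory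

-- main tail lemma
theorem ls_tail {Ω : Type*} [MeasurableSpace Ω] (μ : Measure Ω) [IsProbabilityMeasure μ]
    (n : ℕ) (hn : 0 < n) (Z : Fin n → Ω → ℝ) (Z0 : Ω → ℝ)
    (hmeas : ∀ i, Measurable (Z i))
    (hindep : iIndepFun Z μ)
    (hident : ∀ i, IdentDistrib (Z i) Z0 μ μ)
    (hZ0 : ∀ᵐ ω ∂μ, Z0 ω ≤ 0)
    (hZ2 : Integrable (fun ω => Z0 ω ^ 2) μ)
    (lam : ℝ) (hlam : 0 < lam) (δ : ℝ) (hδ : δ ∈ Set.Ioc (0:ℝ) 1)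
    (R : ℝ) (hR : R = ∫ ω, Z0 ω ∂μ)
    (Rhat : ℝ → Ω → ℝ)
    (hRhat : ∀ l ω, Rhat l ω = -(1 / (n * l)) * ∑ i, Real.log (1 - l * Z i ω)) :
    ENNReal.ofReal (1 - δ) ≤
      μ {ω | R - Rhat lam ω ≤ Real.log (2 / δ) / (lam * n) ∧
             Rhat lam ω - R ≤
               lam * (∫ ω', Z0 ω' ^ 2 / (1 - lam * Z0 ω') ∂μ) +
                 Real.log (2 / δ) / (lam * n)} := by
  obtain ⟨hδ0, hδ1⟩ := hδ
  have hZ0m : AEMeasurable Z0 μ := (hident ⟨0, hn⟩).aemeasurable_snd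
  -- Z0 is integrable
  have hZ0int : Integrable Z0 μ := by
    refine Integrable.mono (hZ2.add (integrable_const 1)) hZ0m.aestronglyMeasurable ?_
    filter_upwards with ω
    have h1 : |Z0 ω| ≤ Z0 ω ^ 2 + 1 := by nlinarith [sq_nonneg (|Z0 ω| - 1), abs_nonneg (Z0 ω), sq_abs (Z0 ω)]
    simpa [abs_of_nonneg (by positivity : (0:ℝ) ≤ Z0 ω ^ 2 + 1)] using h1
  -- each Z i ≤ 0 a.e.
  have hZi0 : ∀ i, ∀ᵐ ω ∂μ, Z i ω ≤ 0 := by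
    intro i
    have hmeq : μ.map (Z i) = μ.map Z0 := (hident i).map_eq
    have h1 : μ (Z i ⁻¹' Set.Ioi 0) = μ (Z0 ⁻¹' Set.Ioi 0) := by
      rw [← Measure.map_apply (hmeas i) measurableSet_Ioi, hmeq,
        Measure.map_apply_of_aemeasurable hZ0m measurableSet_Ioi]
    have h2 : μ (Z0 ⁻¹' Set.Ioi 0) = 0 := by
      have := ae_iff.mp hZ0
      convert this using 2
      ext ω; simp [Set.mem_preimage, not_le]
    rw [ae_iff]
    convert h1.trans h2 using 2
    ext ω; simp [Set.mem_preimage, not_le]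
  have hn' : (0:ℝ) < n := by exact_mod_cast hn
  have hnl : (0:ℝ) < lam * n := by positivity
  set ε : ℝ := Real.log (2 / δ) / (lam * n) with hε
  have hεeq : lam * n * ε = Real.log (2 / δ) := by rw [hε]; field_simp
  -- the functions X i = log(1 - lam * Z i)
  set g : ℝ → ℝ := fun z => Real.log (1 - lam * z) with hg
  have hgm : Measurable g := Real.measurable_log.comp (measurable_const.sub (measurable_id.const_mul lam))
  set X : Fin n → Ω → ℝ := fun i => g ∘ Z i with hX
  have hXm : ∀ i, Measurable (X i) := fun i => hgm.comp (hmeas i)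
  have hXindep : iIndepFun X μ := hindep.comp _ (fun _ => hgm)
  have hZi_int : ∀ i, Integrable (Z i) μ := fun i => ((hident i).integrable_iff).mpr hZ0int
  -- a.e. pointwise facts
  have hpos : ∀ i, ∀ᵐ ω ∂μ, (1:ℝ) ≤ 1 - lam * Z i ω := by
    intro i
    filter_upwards [hZi0 i] with ω h
    nlinarith
  -- integrability of exp(t * X i)
  have hsub_int : ∀ i, Integrable (fun ω => 1 - lam * Z i ω) μ := fun i =>
    (integrable_const 1).sub ((hZi_int i).const_mul lam)
  have hint1 : ∀ i, Integrable (fun ω => Real.exp (1 * X i ω)) μ := by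
    intro i
    refine Integrable.congr (hsub_int i) ?_
    filter_upwards [hpos i] with ω h
    rw [one_mul]
    simp only [hX, hg, Function.comp_apply]
    rw [Real.exp_log (by linarith)]
  have hintneg : ∀ i, Integrable (fun ω => Real.exp ((-1) * X i ω)) μ := by
    intro i
    refine Integrable.mono (integrable_const (1:ℝ)) (((hXm i).const_mul (-1)).exp).aestronglyMeasurable ?_
    filter_upwards [hpos i] with ω h
    have hx0 : 0 ≤ X i ω := by
      simp only [hX, hg, Function.comp_apply]
      exact Real.log_nonneg h
    rw [Real.norm_eq_abs, Real.norm_eq_abs, abs_of_pos (Real.exp_pos _)]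
    simp only [abs_one]
    calc Real.exp ((-1) * X i ω) ≤ Real.exp 0 := by
          apply Real.exp_le_exp.mpr; nlinarith
      _ = 1 := Real.exp_zero
  -- integral quantities
  set m : ℝ := ∫ ω', Z0 ω' ^ 2 / (1 - lam * Z0 ω') ∂μ with hm
  have hm_int : Integrable (fun ω => Z0 ω ^ 2 / (1 - lam * Z0 ω)) μ := by
    refine Integrable.mono hZ2 ((hZ0m.pow_const 2).div (aemeasurable_const.sub (hZ0m.const_mul lam))).aestronglyMeasurable ?_
    filter_upwards [hZ0] with ω h
    have hd : (1:ℝ) ≤ 1 - lam * Z0 ω := by nlinarith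
    rw [Real.norm_eq_abs, Real.norm_eq_abs, abs_of_nonneg (by positivity : (0:ℝ) ≤ Z0 ω ^ 2 / (1 - lam * Z0 ω)), abs_of_nonneg (by positivity : (0:ℝ) ≤ Z0 ω ^ 2)]
    rw [div_le_iff₀ (by linarith)]
    nlinarith [sq_nonneg (Z0 ω)]
  have hm_nonneg : 0 ≤ m := by
    rw [hm]
    refine integral_nonneg_of_ae ?_
    filter_upwards [hZ0] with ω h
    have hd : (1:ℝ) ≤ 1 - lam * Z0 ω := by nlinarith
    positivity
  have hR_nonpos : R ≤ 0 := by
    rw [hR]; exact integral_nonpos_of_ae hZ0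
  -- mgf computations
  have hmgf1 : ∀ i, mgf (X i) μ 1 = 1 - lam * R := by
    intro i
    rw [mgf]
    have : ∫ ω, Real.exp (1 * X i ω) ∂μ = ∫ ω, (1 - lam * Z i ω) ∂μ := by
      refine integral_congr_ae ?_
      filter_upwards [hpos i] with ω h
      rw [one_mul]
      simp only [hX, hg, Function.comp_apply]
      rw [Real.exp_log (by linarith)]
    have h2 : ∫ ω, (1 - lam * Z i ω) ∂μ = (∫ _ω, (1:ℝ) ∂μ) - ∫ ω, lam * Z i ω ∂μ :=
      integral_sub (integrable_const 1) ((hZi_int i).const_mul lam)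
    rw [this, h2, integral_const_mul, (hident i).integral_eq, ← hR]
    simp
  set K : ℝ := ∫ ω', (1 - lam * Z0 ω')⁻¹ ∂μ with hK
  have hKinv_meas : Measurable (fun z : ℝ => (1 - lam * z)⁻¹) :=
    (measurable_const.sub (measurable_id.const_mul lam)).inv
  have hmgfneg : ∀ i, mgf (X i) μ (-1) = K := by
    intro i
    rw [mgf]
    have h1 : ∫ ω, Real.exp ((-1) * X i ω) ∂μ = ∫ ω, ((fun z : ℝ => (1 - lam * z)⁻¹) ∘ Z i) ω ∂μ := by
      refine integral_congr_ae ?_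
      filter_upwards [hpos i] with ω h
      simp only [hX, hg, Function.comp_apply]
      rw [neg_one_mul, Real.exp_neg, Real.exp_log (by linarith)]
    rw [h1, ((hident i).comp hKinv_meas).integral_eq]
    rfl
  have hKval : K = 1 + lam * R + lam ^ 2 * m := by
    rw [hK, hR, hm]
    have h1 : ∫ ω', (1 - lam * Z0 ω')⁻¹ ∂μ = ∫ ω', (1 + lam * Z0 ω' + lam ^ 2 * (Z0 ω' ^ 2 / (1 - lam * Z0 ω'))) ∂μ := by
      refine integral_congr_ae ?_
      filter_upwards [hZ0] with ω h
      have hd : (0:ℝ) < 1 - lam * Z0 ω := by nlinarith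
      field_simp
      ring
    have hi1 : Integrable (fun ω' => 1 + lam * Z0 ω') μ := (integrable_const 1).add (hZ0int.const_mul lam)
    have hi2 : Integrable (fun ω' => lam ^ 2 * (Z0 ω' ^ 2 / (1 - lam * Z0 ω'))) μ := hm_int.const_mul _
    have e1 : ∫ ω', (1 + lam * Z0 ω' + lam ^ 2 * (Z0 ω' ^ 2 / (1 - lam * Z0 ω'))) ∂μ
        = (∫ ω', (1 + lam * Z0 ω') ∂μ) + ∫ ω', lam ^ 2 * (Z0 ω' ^ 2 / (1 - lam * Z0 ω')) ∂μ :=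
      integral_add hi1 hi2
    have e2 : ∫ ω', (1 + lam * Z0 ω') ∂μ = (∫ _ω', (1:ℝ) ∂μ) + ∫ ω', lam * Z0 ω' ∂μ :=
      integral_add (integrable_const 1) (hZ0int.const_mul lam)
    rw [h1, e1, e2, integral_const_mul, integral_const_mul]
    simp
  have hK_le : K ≤ Real.exp (lam * R + lam ^ 2 * m) := by
    rw [hKval]
    have := Real.add_one_le_exp (lam * R + lam ^ 2 * m)
    linarith
  have hK_nonneg : 0 ≤ K := by
    rw [hK]
    refine integral_nonneg_of_ae ?_
    filter_upwards [hZ0] with ω h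
    have hd : (0:ℝ) < 1 - lam * Z0 ω := by nlinarith
    positivity
  have h1R_nonneg : (0:ℝ) ≤ 1 - lam * R := by nlinarith
  have h1R_le : 1 - lam * R ≤ Real.exp (-(lam * R)) := by
    have := Real.add_one_le_exp (-(lam * R)); linarith
  -- exp(-lam n ε) = δ / 2
  have hexpδ : Real.exp (-(lam * n * ε)) = δ / 2 := by
    rw [hεeq, Real.exp_neg, Real.exp_log (by positivity)]
    field_simp
  -- Chernoff bounds
  set S : Ω → ℝ := ∑ i, X i with hS
  have hSfun : S = fun ω => ∑ i, X i ω := by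
    funext ω; rw [hS]; simp [Finset.sum_apply]
  have hSm : Measurable S := by
    rw [hSfun]; exact Finset.univ.measurable_sum fun i _ => hXm i
  have hSapp : ∀ ω, S ω = ∑ i, Real.log (1 - lam * Z i ω) := by
    intro ω; rw [hS]; simp [Finset.sum_apply, hX, hg]
  have hSint1 : Integrable (fun ω => Real.exp (1 * S ω)) μ :=
    hXindep.integrable_exp_mul_sum hXm (fun i _ => hint1 i)
  have hSintneg : Integrable (fun ω => Real.exp ((-1) * S ω)) μ :=
    hXindep.integrable_exp_mul_sum hXm (fun i _ => hintneg i)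
  have hmgfS1 : mgf S μ 1 = (1 - lam * R) ^ n := by
    rw [hS, hXindep.mgf_sum hXm Finset.univ]
    simp [hmgf1]
  have hmgfSneg : mgf S μ (-1) = K ^ n := by
    rw [hS, hXindep.mgf_sum hXm Finset.univ]
    simp [hmgfneg]
  set a : ℝ := lam * n * (ε - R) with ha
  set b : ℝ := lam * n * (-R - lam * m - ε) with hb
  have hA : (μ {ω | a ≤ S ω}).toReal ≤ δ / 2 := by
    refine (measure_ge_le_exp_mul_mgf a zero_le_one hSint1).trans ?_
    rw [hmgfS1]
    calc Real.exp (-1 * a) * (1 - lam * R) ^ n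
        ≤ Real.exp (-1 * a) * (Real.exp (-(lam * R))) ^ n :=
          mul_le_mul_of_nonneg_left (pow_le_pow_left₀ h1R_nonneg h1R_le n) (Real.exp_pos _).le
      _ = Real.exp (-1 * a + n * (-(lam * R))) := by
          rw [← Real.exp_nat_mul, ← Real.exp_add]
      _ = Real.exp (-(lam * n * ε)) := by
          congr 1; rw [ha]; ring
      _ = δ / 2 := hexpδ
  have hB : (μ {ω | S ω ≤ b}).toReal ≤ δ / 2 := by
    refine (measure_le_le_exp_mul_mgf b (by norm_num) hSintneg).trans ?_
    rw [hmgfSneg]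
    calc Real.exp (-(-1) * b) * K ^ n
        ≤ Real.exp (-(-1) * b) * (Real.exp (lam * R + lam ^ 2 * m)) ^ n :=
          mul_le_mul_of_nonneg_left (pow_le_pow_left₀ hK_nonneg hK_le n) (Real.exp_pos _).le
      _ = Real.exp (-(-1) * b + n * (lam * R + lam ^ 2 * m)) := by
          rw [← Real.exp_nat_mul, ← Real.exp_add]
      _ = Real.exp (-(lam * n * ε)) := by
          congr 1; rw [hb]; ring
      _ = δ / 2 := hexpδ
  -- the target set
  set T := {ω | R - Rhat lam ω ≤ ε ∧ Rhat lam ω - R ≤ lam * m + ε} with hT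
  have hRhatm : Rhat lam = fun ω => -(1 / (n * lam)) * S ω := by
    funext ω; rw [hRhat, hSapp]
  have hRm : Measurable (Rhat lam) := by
    rw [hRhatm]; exact hSm.const_mul _
  have hTmeas : MeasurableSet T := by
    rw [hT]
    have h1 : MeasurableSet {ω | R - Rhat lam ω ≤ ε} :=
      measurableSet_le (measurable_const.sub hRm) measurable_const
    have h2 : MeasurableSet {ω | Rhat lam ω - R ≤ lam * m + ε} :=
      measurableSet_le (hRm.sub measurable_const) measurable_const
    exact h1.inter h2
  have hTc : Tᶜ ⊆ {ω | a ≤ S ω} ∪ {ω | S ω ≤ b} := by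
    intro ω hω
    simp only [Set.mem_compl_iff, hT, Set.mem_setOf_eq, not_and_or, not_le] at hω
    have hRω : Rhat lam ω = -(1 / (n * lam)) * S ω := by rw [hRhatm]
    have h3 : lam * ↑n * (1 / (↑n * lam) * S ω) = S ω := by field_simp
    rcases hω with h | h
    · left
      rw [hRω] at h
      have h' : ε - R < 1 / (↑n * lam) * S ω := by linarith
      have h2 := mul_lt_mul_of_pos_left h' hnl
      show a ≤ S ω
      rw [ha]; linarith
    · right
      rw [hRω] at h
      have h' : 1 / (↑n * lam) * S ω < -R - lam * m - ε := by linarith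
      have h2 := mul_lt_mul_of_pos_left h' hnl
      show S ω ≤ b
      rw [hb]; linarith
  have hcompl : (μ Tᶜ).toReal ≤ δ := by
    have h1 : μ Tᶜ ≤ μ {ω | a ≤ S ω} + μ {ω | S ω ≤ b} :=
      (measure_mono hTc).trans (measure_union_le _ _)
    have h2 : (μ Tᶜ).toReal ≤ (μ {ω | a ≤ S ω} + μ {ω | S ω ≤ b}).toReal :=
      ENNReal.toReal_mono (ENNReal.add_ne_top.mpr ⟨measure_ne_top _ _, measure_ne_top _ _⟩) h1
    rw [ENNReal.toReal_add (measure_ne_top _ _) (measure_ne_top _ _)] at h2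
    linarith
  refine ENNReal.ofReal_le_of_le_toReal ?_
  have hadd := measure_add_measure_compl (μ := μ) hTmeas
  rw [measure_univ] at hadd
  have hsum : (μ T).toReal + (μ Tᶜ).toReal = 1 := by
    rw [← ENNReal.toReal_add (measure_ne_top _ _) (measure_ne_top _ _), hadd, ENNReal.toReal_one]
  linarith


theorem stmt11 {Ω : Type*} [MeasurableSpace Ω] (μ : Measure Ω) [IsProbabilityMeasure μ]
    (n : ℕ) (hn : 0 < n) (Z : Fin n → Ω → ℝ) (Z0 : Ω → ℝ)
    (hmeas : ∀ i, Measurable (Z i))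
    (hindep : iIndepFun Z μ)
    (hident : ∀ i, IdentDistrib (Z i) Z0 μ μ)
    (hZ0 : ∀ᵐ ω ∂μ, Z0 ω ≤ 0)
    (hZ2 : Integrable (fun ω => Z0 ω ^ 2) μ)
    (lam : ℝ) (hlam : 0 < lam) (δ : ℝ) (hδ : δ ∈ Set.Ioc (0:ℝ) 1)
    (R : ℝ) (hR : R = ∫ ω, Z0 ω ∂μ)
    (Rhat : ℝ → Ω → ℝ)
    (hRhat : ∀ l ω, Rhat l ω = -(1 / (n * l)) * ∑ i, Real.log (1 - l * Z i ω)) :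
    (ENNReal.ofReal (1 - δ) ≤
      μ {ω | R - Rhat lam ω ≤ Real.log (2 / δ) / (lam * n) ∧
             Rhat lam ω - R ≤
               lam * (∫ ω', Z0 ω' ^ 2 / (1 - lam * Z0 ω') ∂μ) +
                 Real.log (2 / δ) / (lam * n)}) ∧
    (ENNReal.ofReal (1 - δ) ≤
      μ {ω | |R - Rhat (Real.sqrt (Real.log (2 / δ) / (n * ∫ ω', Z0 ω' ^ 2 ∂μ))) ω| ≤
             2 * Real.sqrt ((∫ ω', Z0 ω' ^ 2 ∂μ) * Real.log (2 / δ) / n)}) := by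
  obtain ⟨hδ0, hδ1⟩ := hδ
  have hn' : (0:ℝ) < n := by exact_mod_cast hn
  constructor
  · exact ls_tail μ n hn Z Z0 hmeas hindep hident hZ0 hZ2 lam hlam δ ⟨hδ0, hδ1⟩ R hR Rhat hRhat
  · set M : ℝ := ∫ ω', Z0 ω' ^ 2 ∂μ with hM
    set L : ℝ := Real.log (2 / δ) with hL
    have hL0 : 0 < L := by
      rw [hL]
      apply Real.log_pos
      rw [lt_div_iff₀ hδ0]; linarith
    have hM0 : 0 ≤ M := by
      rw [hM]; exact integral_nonneg fun ω => by positivity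
    rcases eq_or_lt_of_le hM0 with hMeq | hMpos
    · -- degenerate case M = 0
      have hZ00 : Z0 =ᵐ[μ] 0 := by
        have h1 : (fun ω => Z0 ω ^ 2) =ᵐ[μ] 0 := by
          rw [← integral_eq_zero_iff_of_nonneg_ae (by filter_upwards with ω; positivity) hZ2]
          exact hMeq.symm
        filter_upwards [h1] with ω h
        have : Z0 ω ^ 2 = 0 := h
        nlinarith [sq_nonneg (Z0 ω)]
      have hR0 : R = 0 := by
        rw [hR, integral_congr_ae hZ00]; simp
      have hlam0 : Real.sqrt (L / (↑n * M)) = 0 := by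
        rw [← hMeq, mul_zero, div_zero, Real.sqrt_zero]
      have hRhat0 : ∀ ω, Rhat (Real.sqrt (L / (↑n * M))) ω = 0 := by
        intro ω
        rw [hRhat, hlam0]
        simp
      have : {ω | |R - Rhat (Real.sqrt (L / (↑n * M))) ω| ≤
          2 * Real.sqrt (M * L / ↑n)} = Set.univ := by
        ext ω
        simp only [Set.mem_setOf_eq, Set.mem_univ, iff_true]
        rw [hRhat0, hR0]
        simp [← hMeq]
      rw [this, measure_univ]
      exact ENNReal.ofReal_le_one.mpr (by linarith)
    · -- main case M > 0
      set ls : ℝ := Real.sqrt (L / (↑n * M)) with hls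
      have hlspos : 0 < ls := Real.sqrt_pos.mpr (by positivity)
      have hlssq : ls ^ 2 = L / (↑n * M) := Real.sq_sqrt (by positivity)
      have hLeq : L = ls ^ 2 * (↑n * M) := by
        rw [hlssq]; field_simp
      have hkey : L / (ls * ↑n) = ls * M := by
        rw [hLeq]; field_simp
      have hsqrtMLn : Real.sqrt (M * L / ↑n) = ls * M := by
        rw [show M * L / ↑n = (ls * M) ^ 2 by rw [hLeq]; field_simp]
        exact Real.sqrt_sq (by positivity)
      -- m* ≤ M
      have hZ0m : AEMeasurable Z0 μ := (hident ⟨0, hn⟩).aemeasurable_snd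
      have hm_int : Integrable (fun ω => Z0 ω ^ 2 / (1 - ls * Z0 ω)) μ := by
        refine Integrable.mono hZ2 ((hZ0m.pow_const 2).div
          (aemeasurable_const.sub (hZ0m.const_mul ls))).aestronglyMeasurable ?_
        filter_upwards [hZ0] with ω h
        have hd : (1:ℝ) ≤ 1 - ls * Z0 ω := by nlinarith
        rw [Real.norm_eq_abs, Real.norm_eq_abs,
          abs_of_nonneg (by positivity : (0:ℝ) ≤ Z0 ω ^ 2 / (1 - ls * Z0 ω)),
          abs_of_nonneg (by positivity : (0:ℝ) ≤ Z0 ω ^ 2)]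
        rw [div_le_iff₀ (by linarith)]
        nlinarith [sq_nonneg (Z0 ω)]
      have hmleM : (∫ ω', Z0 ω' ^ 2 / (1 - ls * Z0 ω') ∂μ) ≤ M := by
        rw [hM]
        refine integral_mono_ae hm_int hZ2 ?_
        filter_upwards [hZ0] with ω h
        have hd : (1:ℝ) ≤ 1 - ls * Z0 ω := by nlinarith
        rw [div_le_iff₀ (by linarith)]
        nlinarith [sq_nonneg (Z0 ω)]
      have htail := ls_tail μ n hn Z Z0 hmeas hindep hident hZ0 hZ2 ls hlspos δ ⟨hδ0, hδ1⟩ R hR Rhat hRhat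
      refine htail.trans (measure_mono ?_)
      intro ω hω
      obtain ⟨h1, h2⟩ := hω
      simp only [Set.mem_setOf_eq]
      rw [hsqrtMLn]
      rw [← hL, hkey] at h1 h2
      rw [abs_le]
      constructor
      · -- -(2 ls M) ≤ R - Rhat
        have hh : ls * (∫ ω', Z0 ω' ^ 2 / (1 - ls * Z0 ω') ∂μ) ≤ ls * M :=
          mul_le_mul_of_nonneg_left hmleM hlspos.le
        linarith
      · have hh : 0 ≤ ls * M := mul_nonneg hlspos.le hMpos.le
        linarith
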